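/- Let T be the base-3 shift Tx = 3x mod 1, let x = 0.\overline{20101012012222222222} (the number with periodic base-3 expansion of period 20 given by digits 2,0,1,0,1,0,1,2,0,1,2,2,2,2,2,2,2,2,2,2), and let C_s be the cylinder of the two-digit string s = [0,1]. Then lim_{N→∞} (1/N)·#{0 ≤ n < N : (T²)ⁿ x ∈ C_s} = 1/10, while lim_{N→∞} (1/(2N))·#{0 ≤ n < 2N : Tⁿ x ∈ ⋃_{i∈{1,3,5}} E(i)} = 3/20, where E(i) = {y ∈ C_s : T^{2+i} y ∈ C_s}. -/

import Mathlib

open MeasureTheory Filter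

/-- The base-3 shift `x ↦ 3x mod 1` on `[0,1)`. -/
noncomputable def T3 (y : ℝ) : ℝ := Int.fract (3 * y)

/-- The period-20 digit pattern `2,0,1,0,1,0,1,2,0,1,2,2,2,2,2,2,2,2,2,2`. -/
def digits20 : Fin 20 → ℕ := ![2, 0, 1, 0, 1, 0, 1, 2, 0, 1, 2, 2, 2, 2, 2, 2, 2, 2, 2, 2]

/-- The number `x = 0.\overline{20101012012222222222}` in base 3. -/
noncomputable def xCounter : ℝ :=
  (∑ i : Fin 20, (digits20 i : ℝ) * 3 ^ (19 - (i : ℕ))) / (3 ^ 20 - 1)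

/-- The cylinder of the two-digit base-3 string `[0,1]`: first digit `0`, second digit `1`. -/
def Cyl01 : Set ℝ := Set.Ico (1 / 9 : ℝ) (2 / 9)

/-- `E i = {y ∈ C_s : T^{2+i} y ∈ C_s}`. -/
noncomputable def Eset (i : ℕ) : Set ℝ := {y ∈ Cyl01 | T3^[2 + i] y ∈ Cyl01}

/-! ### Auxiliary material -/

/-- Numerators of the orbit of `xCounter` over the common denominator `3^20 - 1`. -/
def Alist : List ℕ :=
  [2470787306, 438793118, 1316379354, 462353662, 1387060986, 674398558, 2023195674,
   2582802622, 774839066, 2324517198, 3486767194, 3486732782, 3486629546, 3486319838,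
   3485390714, 3482603342, 3474241226, 3449154878, 3373895834, 3148118702]

def Anum (n : ℕ) : ℕ := Alist.getD n 0

/-- The orbit points. -/
noncomputable def vpt (n : ℕ) : ℝ := (Anum (n % 20) : ℝ) / 3486784400

lemma T3_rat (a a' : ℕ) (h : (3 * a) % 3486784400 = a') :
    T3 ((a : ℝ) / 3486784400) = (a' : ℝ) / 3486784400 := by
  rw [T3, show (3 : ℝ) * ((a : ℝ) / 3486784400) = ((3 * a : ℕ) : ℝ) / ((3486784400 : ℕ) : ℝ) by
    push_cast; ring, Int.fract_div_natCast_eq_div_natCast_mod, h]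
  norm_num

lemma vpt_step (n : ℕ) : T3 (vpt n) = vpt (n + 1) := by
  have hmod : (n + 1) % 20 = (n % 20 + 1) % 20 := by omega
  have h20 : n % 20 < 20 := Nat.mod_lt _ (by norm_num)
  rw [vpt, vpt, hmod]
  set r := n % 20 with hr
  clear_value r
  interval_cases r <;> exact T3_rat _ _ (by norm_num [Anum, Alist])

lemma xCounter_eq : xCounter = vpt 0 := by
  rw [xCounter, vpt]
  norm_num [Fin.sum_univ_succ, digits20, Anum, Alist]

lemma orbit_eq (n : ℕ) : T3^[n] xCounter = vpt n := by
  induction n with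
  | zero => simpa using xCounter_eq
  | succ n ih => rw [Function.iterate_succ_apply', ih, vpt_step]

lemma vpt_mem_cyl (n : ℕ) :
    vpt n ∈ Cyl01 ↔ (n % 20 = 1 ∨ n % 20 = 3 ∨ n % 20 = 5 ∨ n % 20 = 8) := by
  have h20 : n % 20 < 20 := Nat.mod_lt _ (by norm_num)
  rw [vpt, Cyl01, Set.mem_Ico]
  set r := n % 20 with hr
  clear_value r
  interval_cases r <;> norm_num [Anum, Alist]

lemma orbit_mem_cyl (n : ℕ) :
    T3^[n] xCounter ∈ Cyl01 ↔ (n % 20 = 1 ∨ n % 20 = 3 ∨ n % 20 = 5 ∨ n % 20 = 8) := by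
  rw [orbit_eq, vpt_mem_cyl]

lemma orbit_mem_Eset (n i : ℕ) :
    T3^[n] xCounter ∈ Eset i ↔
      ((n % 20 = 1 ∨ n % 20 = 3 ∨ n % 20 = 5 ∨ n % 20 = 8) ∧
       ((2 + i + n) % 20 = 1 ∨ (2 + i + n) % 20 = 3 ∨ (2 + i + n) % 20 = 5 ∨
        (2 + i + n) % 20 = 8)) := by
  have h : T3^[2 + i] (T3^[n] xCounter) = T3^[2 + i + n] xCounter :=
    (Function.iterate_add_apply T3 (2 + i) n xCounter).symm
  rw [Eset, Set.mem_setOf_eq, h, orbit_mem_cyl, orbit_mem_cyl]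

/-! ### Counting lemmas -/

lemma sum_mod_block (m t : ℕ) (f : ℕ → ℕ) :
    ∑ n ∈ Finset.range (m * t), f (n % m) = t * ∑ j ∈ Finset.range m, f (j % m) := by
  induction t with
  | zero => simp
  | succ t ih =>
    have hle : m * t ≤ m * t + m := Nat.le_add_right _ _
    rw [Nat.mul_succ, Finset.range_eq_Ico, ← Finset.sum_Ico_consecutive _ (Nat.zero_le _) hle,
      ← Finset.range_eq_Ico, ih, Finset.sum_Ico_eq_sum_range]
    simp only [Nat.add_sub_cancel_left, Nat.mul_add_mod]
    ring

lemma tendsto_freq (m : ℕ) (hm : 0 < m) (f : ℕ → ℕ) (hf : ∀ j, f j ≤ 1) (k : ℕ)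
    (hk : ∑ j ∈ Finset.range m, f (j % m) = k) :
    Tendsto (fun N : ℕ => ((∑ n ∈ Finset.range N, f (n % m) : ℕ) : ℝ) / N)
      atTop (nhds ((k : ℝ) / m)) := by
  have hkm : k ≤ m := by
    calc k = ∑ j ∈ Finset.range m, f (j % m) := hk.symm
    _ ≤ ∑ j ∈ Finset.range m, 1 := Finset.sum_le_sum fun j _ => hf _
    _ = m := by simp
  have key : ∀ N : ℕ, 1 ≤ N →
      |((∑ n ∈ Finset.range N, f (n % m) : ℕ) : ℝ) / N - (k : ℝ) / m| ≤ (m : ℝ) / N := by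
    intro N hN
    set c : ℕ := ∑ n ∈ Finset.range N, f (n % m) with hc
    set t : ℕ := N / m with ht
    have h1 : m * t ≤ N := Nat.mul_div_le N m
    have h2 : N ≤ m * t + m := by
      have h := Nat.div_add_mod N m
      have h' := Nat.mod_lt N hm
      rw [← ht] at h
      omega
    have hlo : t * k ≤ c := by
      rw [← hk, ← sum_mod_block]
      exact Finset.sum_le_sum_of_subset (Finset.range_subset_range.2 h1)
    have hhi : c ≤ t * k + k := by
      have : c ≤ ∑ n ∈ Finset.range (m * (t + 1)), f (n % m) :=
        Finset.sum_le_sum_of_subset (Finset.range_subset_range.2 (by rw [Nat.mul_succ]; omega))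
      rw [sum_mod_block, hk, Nat.succ_mul] at this
      omega
    have hN' : (0 : ℝ) < N := by exact_mod_cast hN
    have hm' : (0 : ℝ) < m := by exact_mod_cast hm
    have hcast1 : (m : ℝ) * t ≤ N := by exact_mod_cast h1
    have hcast2 : (N : ℝ) ≤ m * t + m := by exact_mod_cast h2
    have hcast3 : (t : ℝ) * k ≤ c := by exact_mod_cast hlo
    have hcast4 : (c : ℝ) ≤ t * k + k := by exact_mod_cast hhi
    have hcast5 : (k : ℝ) ≤ m := by exact_mod_cast hkm
    have hk0 : (0 : ℝ) ≤ k := by positivity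
    rw [abs_sub_le_iff]
    constructor
    · rw [div_sub_div _ _ hN'.ne' hm'.ne', div_le_div_iff₀ (by positivity) hN']
      have hub : (c : ℝ) * m ≤ k * N + m * m := by
        nlinarith [mul_nonneg hk0 (sub_nonneg.2 hcast1),
          mul_le_mul_of_nonneg_right hcast4 hm'.le,
          mul_le_mul_of_nonneg_right hcast5 hm'.le]
      nlinarith [mul_le_mul_of_nonneg_right hub hN'.le]
    · rw [div_sub_div _ _ hm'.ne' hN'.ne', div_le_div_iff₀ (by positivity) hN']
      have hlb : (k : ℝ) * N ≤ m * c + m * m := by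
        nlinarith [mul_le_mul_of_nonneg_left hcast2 hk0,
          mul_le_mul_of_nonneg_left hcast3 hm'.le,
          mul_le_mul_of_nonneg_right hcast5 hm'.le]
      nlinarith [mul_le_mul_of_nonneg_right hlb hN'.le]
  have h0 : Tendsto
      (fun N : ℕ => ((∑ n ∈ Finset.range N, f (n % m) : ℕ) : ℝ) / N - (k : ℝ) / m)
      atTop (nhds 0) := by
    apply squeeze_zero_norm' _ (tendsto_const_div_atTop_nhds_zero_nat (m : ℝ))
    filter_upwards [eventually_ge_atTop 1] with N hN
    exact key N hN
  have := h0.add_const ((k : ℝ) / m)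
  simpa using this

lemma natcard_eq (N : ℕ) (p : ℕ → Prop) [DecidablePred p] :
    Nat.card {n : ℕ | n < N ∧ p n} = ((Finset.range N).filter p).card := by
  have h : {n : ℕ | n < N ∧ p n} = ↑((Finset.range N).filter p) := by
    ext n; simp [Finset.mem_filter]
  rw [h, Nat.card_coe_set_eq, Set.ncard_coe_finset]

lemma card_filter_eq_sum (N : ℕ) (p : ℕ → Prop) [DecidablePred p] (f : ℕ → ℕ)
    (hpf : ∀ n, (if p n then 1 else 0) = f (n % 20)) :
    ((Finset.range N).filter p).card = ∑ n ∈ Finset.range N, f (n % 20) := by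
  rw [Finset.card_filter]
  exact Finset.sum_congr rfl fun n _ => hpf n

/-- The counterexample to Schweiger's inequality: the `T²`-orbit of `x` visits `C_{[0,1]}`
with frequency `1/10`, while the `T`-orbit visits `E(1) ∪ E(3) ∪ E(5)` with frequency
`3/20` (relative to `2N`). -/
theorem schweiger_counterexample :
    Filter.Tendsto
      (fun N => (Nat.card {n : ℕ | n < N ∧ T3^[2 * n] xCounter ∈ Cyl01} : ℝ) / N)
      Filter.atTop (nhds (1 / 10)) ∧
    Filter.Tendsto
      (fun N => (Nat.card {n : ℕ | n < 2 * N ∧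
          T3^[n] xCounter ∈ Eset 1 ∪ Eset 3 ∪ Eset 5} : ℝ) / (2 * N))
      Filter.atTop (nhds (3 / 20)) := by
  classical
  constructor
  · -- first limit
    have hchar : ∀ n : ℕ, (T3^[2 * n] xCounter ∈ Cyl01) ↔ n % 10 = 4 := by
      intro n
      rw [orbit_mem_cyl]
      omega
    set g : ℕ → ℕ := fun j => if j = 4 then 1 else 0 with hgdef
    have hpg : ∀ n : ℕ, (if T3^[2 * n] xCounter ∈ Cyl01 then 1 else 0) = g (n % 10) := by
      intro n
      by_cases h : T3^[2 * n] xCounter ∈ Cyl01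
      · rw [if_pos h]
        have hm := (hchar n).1 h
        simp only [hgdef]
        rw [if_pos hm]
      · rw [if_neg h]
        have hn : ¬ n % 10 = 4 := fun hc => h ((hchar n).2 hc)
        simp only [hgdef]
        rw [if_neg hn]
    have hmain := tendsto_freq 10 (by norm_num) g (fun j => by
        simp only [hgdef]; split <;> omega) 1 (by decide)
    have heq : ∀ N : ℕ,
        (Nat.card {n : ℕ | n < N ∧ T3^[2 * n] xCounter ∈ Cyl01} : ℝ)
          = ((∑ n ∈ Finset.range N, g (n % 10) : ℕ) : ℝ) := by
      intro N
      congr 1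
      rw [natcard_eq N (fun n => T3^[2 * n] xCounter ∈ Cyl01), Finset.card_filter]
      exact Finset.sum_congr rfl fun n _ => hpg n
    simp only [Nat.cast_one, Nat.cast_ofNat] at hmain
    exact hmain.congr fun N => by rw [heq N]
  · -- second limit
    have hchar : ∀ n : ℕ, (T3^[n] xCounter ∈ Eset 1 ∪ Eset 3 ∪ Eset 5) ↔
        (n % 20 = 1 ∨ n % 20 = 3 ∨ n % 20 = 5) := by
      intro n
      simp only [Set.mem_union, orbit_mem_Eset]
      omega
    set g : ℕ → ℕ := fun j => if j = 1 ∨ j = 3 ∨ j = 5 then 1 else 0 with hgdef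
    have hpg : ∀ n : ℕ,
        (if T3^[n] xCounter ∈ Eset 1 ∪ Eset 3 ∪ Eset 5 then 1 else 0) = g (n % 20) := by
      intro n
      by_cases h : T3^[n] xCounter ∈ Eset 1 ∪ Eset 3 ∪ Eset 5
      · rw [if_pos h]
        have hm := (hchar n).1 h
        simp only [hgdef]
        rw [if_pos hm]
      · rw [if_neg h]
        have hn : ¬(n % 20 = 1 ∨ n % 20 = 3 ∨ n % 20 = 5) := fun hc => h ((hchar n).2 hc)
        simp only [hgdef]
        rw [if_neg hn]
    have hmain := tendsto_freq 20 (by norm_num) g (fun j => by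
        simp only [hgdef]; split <;> omega) 3 (by decide)
    have hcomp : Tendsto (fun N : ℕ => 2 * N) atTop atTop := by
      apply tendsto_atTop_atTop.2
      intro b
      exact ⟨b, fun a ha => by omega⟩
    have hmain2 := hmain.comp hcomp
    have heq : ∀ N : ℕ,
        (Nat.card {n : ℕ | n < 2 * N ∧ T3^[n] xCounter ∈ Eset 1 ∪ Eset 3 ∪ Eset 5} : ℝ)
          = ((∑ n ∈ Finset.range (2 * N), g (n % 20) : ℕ) : ℝ) := by
      intro N
      congr 1
      rw [natcard_eq (2 * N) (fun n => T3^[n] xCounter ∈ Eset 1 ∪ Eset 3 ∪ Eset 5),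
        Finset.card_filter]
      exact Finset.sum_congr rfl fun n _ => hpg n
    simp only [Nat.cast_ofNat] at hmain2
    refine hmain2.congr fun N => ?_
    simp only [Function.comp]
    rw [heq N]
    push_cast
    ring
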